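/- For p an odd prime, n ≥ 2 an integer, and ζ a primitive p^n-th root of unity, in ℤ[ζ] one has (1-ζ)^{p^n - p^{n-1}} ≡ -p (mod (1-ζ)^{p^n}). -/

import Mathlib

open Finset Polynomial

private lemma dvd_prod_sub_prod {R : Type*} [CommRing R] {ι : Type*} (s : Finset ι)
    (f g : ι → R) (x : R) (h : ∀ i ∈ s, x ∣ f i - g i) :
    x ∣ (∏ i ∈ s, f i) - ∏ i ∈ s, g i := by
  classical
  induction s using Finset.cons_induction with
  | empty => simp
  | cons a s ha ih =>
    rw [Finset.prod_cons, Finset.prod_cons]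
    have h1 : x ∣ f a - g a := h a (Finset.mem_cons_self a s)
    have h2 : x ∣ (∏ i ∈ s, f i) - ∏ i ∈ s, g i :=
      ih fun i hi => h i (Finset.mem_cons_of_mem hi)
    have e : f a * ∏ i ∈ s, f i - g a * ∏ i ∈ s, g i =
        f a * ((∏ i ∈ s, f i) - ∏ i ∈ s, g i) + (f a - g a) * ∏ i ∈ s, g i := by ring
    rw [e]
    exact dvd_add (h2.mul_left _) (h1.mul_right _)

private lemma auxA {R : Type*} [CommRing R] {p : ℕ} (hp : p.Prime) (hodd : Odd p) (x : R) :
    (p : R) * x ∣ (1 - x) ^ p - 1 + x ^ p := by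
  have h := add_pow_prime_eq hp (-x) (1 : R)
  have hx : (1 - x) ^ p = (-x + 1) ^ p := by ring_nf
  rw [hx, h, hodd.neg_pow, one_pow]
  have e : -x ^ p + 1 + (p : R) * -x * 1 * ∑ k ∈ Finset.Ioo 0 p, (-x) ^ (k - 1) * 1 ^ (p - k - 1) * ↑(p.choose k / p)
      - 1 + x ^ p
      = (p : R) * x * -(∑ k ∈ Finset.Ioo 0 p, (-x) ^ (k - 1) * 1 ^ (p - k - 1) * ↑(p.choose k / p)) := by ring
  rw [e]
  exact dvd_mul_right _ _

private lemma auxB {R : Type*} [CommRing R] {p : ℕ} (hp : p.Prime) (hodd : Odd p) (x : R)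
    (j : ℕ) : (p : R) * x ∣ (1 - x) ^ p ^ j - (1 - x ^ p ^ j) := by
  induction j with
  | zero => simp
  | succ j ih =>
    have h1 : (1 - x) ^ p ^ (j + 1) = ((1 - x) ^ p ^ j) ^ p := by
      rw [← pow_mul, pow_succ]
    set A := (1 - x) ^ p ^ j with hA
    set y := x ^ p ^ j with hy
    have h2 : (p : R) * x ∣ A ^ p - (1 - y) ^ p :=
      dvd_trans ih (sub_dvd_pow_sub_pow A (1 - y) p)
    have h3 : (p : R) * x ∣ (1 - y) ^ p - (1 - x ^ p ^ (j + 1)) := by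
      have hyy : x ^ p ^ (j + 1) = y ^ p := by rw [hy, ← pow_mul, pow_succ]
      have := auxA hp hodd y
      have hxy : (p : R) * x ∣ (p : R) * y :=
        mul_dvd_mul_left _ (dvd_pow_self x (pow_pos hp.pos j).ne')
      have e : (1 - y) ^ p - (1 - x ^ p ^ (j + 1)) = (1 - y) ^ p - 1 + y ^ p := by
        rw [hyy]; ring
      rw [e]
      exact hxy.trans this
    have e : (1 - x) ^ p ^ (j + 1) - (1 - x ^ p ^ (j + 1))
        = (A ^ p - (1 - y) ^ p) + ((1 - y) ^ p - (1 - x ^ p ^ (j + 1))) := by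
      rw [h1]; ring
    rw [e]
    exact dvd_add h2 h3

theorem stmt_13 (p n : ℕ) (hp : p.Prime) (hodd : p ≠ 2) (hn : 2 ≤ n)
    (R : Type*) [CommRing R] [IsDomain R] [CharZero R] (ζ : R)
    (hζ : IsPrimitiveRoot ζ (p ^ n)) (hadj : Algebra.adjoin ℤ {ζ} = ⊤) :
    (1 - ζ) ^ p ^ n ∣ (1 - ζ) ^ (p ^ n - p ^ (n - 1)) + (p : R) := by
  haveI := Fact.mk hp
  obtain ⟨n', rfl⟩ : ∃ n', n = n' + 1 := ⟨n - 1, by omega⟩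
  have hp3 : 3 ≤ p := by
    rcases hp.two_le.lt_or_eq with h | h
    · omega
    · omega
  have hoddp : Odd p := hp.odd_of_ne_two hodd
  set l : R := 1 - ζ with hl
  set m : ℕ := p ^ n' with hm
  have hm1 : 1 ≤ m := Nat.one_le_pow _ _ hp.pos
  set q : ℕ := p - 1 with hq
  have hq1 : 2 ≤ q := by omega
  set φn : ℕ := m * q with hφn
  have hmul : m * p = φn + m := by
    rw [hφn, hq]
    have : m * (p - 1) + m = m * (p - 1 + 1) := by rw [Nat.mul_succ]
    rw [this, Nat.sub_add_cancel hp.pos]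
  have hpow_succ : p ^ (n' + 1) = m * p := by rw [pow_succ, hm]
  have hφ : p ^ (n' + 1) - p ^ (n' + 1 - 1) = φn := by
    simp only [Nat.add_sub_cancel]
    rw [hpow_succ, ← hm]
    omega
  have hmm : m + m ≤ φn := by
    rw [hφn]
    calc m + m = m * 2 := by ring
    _ ≤ m * q := Nat.mul_le_mul_left m hq1
  -- Step 2: l ^ φn ∣ p
  have hpn_pos : 0 < p ^ (n' + 1) := pow_pos hp.pos _
  haveI : NeZero (p ^ (n' + 1)) := ⟨hpn_pos.ne'⟩
  have hcyc : (p : R) = ∏ μ ∈ primitiveRoots (p ^ (n' + 1)) R, (1 - μ) := by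
    have h1 : eval 1 (cyclotomic (p ^ (n' + 1)) R) = (p : R) :=
      eval_one_cyclotomic_prime_pow n'
    rw [cyclotomic_eq_prod_X_sub_primitiveRoots hζ] at h1
    rw [← h1, eval_prod]
    refine Finset.prod_congr rfl fun μ _ => by simp
  have hcard : (primitiveRoots (p ^ (n' + 1)) R).card = φn := by
    rw [hζ.card_primitiveRoots, Nat.totient_prime_pow_succ hp n']
  have hdvdPhi : l ^ φn ∣ (p : R) := by
    rw [hcyc, ← hcard, ← Finset.prod_const]
    refine Finset.prod_dvd_prod_of_dvd _ _ fun μ hμ => ?_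
    have hμ1 : μ ^ (p ^ (n' + 1)) = 1 :=
      ((mem_primitiveRoots hpn_pos).mp hμ).pow_eq_one
    obtain ⟨i, _, rfl⟩ := hζ.eq_pow_of_pow_eq_one hμ1
    exact ⟨∑ j ∈ range i, ζ ^ j, by linear_combination geom_sum_mul ζ i⟩
  obtain ⟨G, hG⟩ := hdvdPhi
  -- Step 3: η := ζ ^ m is a primitive p-th root of unity
  have hη : IsPrimitiveRoot (ζ ^ m) p := hζ.pow hpn_pos hpow_succ
  set η : R := ζ ^ m with hηdef
  -- Step 4: (1 - η) ^ p ∣ (1 - η) ^ q + p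
  have hη' : IsPrimitiveRoot η (q + 1) := by rwa [hq, Nat.sub_add_cancel hp.pos]
  have hprod := hη'.prod_one_sub_pow_eq_order
  have hfac : ∀ k : ℕ, (1 : R) - η ^ (k + 1) = (1 - η) * ∑ i ∈ range (k + 1), η ^ i :=
    fun k => by linear_combination geom_sum_mul η (k + 1)
  set T : R := ∏ k ∈ range q, ∑ i ∈ range (k + 1), η ^ i with hT
  have hpT : (p : R) = (1 - η) ^ q * T := by
    have h2 : ((q : R) + 1) = (p : R) := by
      have hqp : q + 1 = p := by omega
      rw [← hqp]
      push_cast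
      ring
    rw [← h2, ← hprod, Finset.prod_congr rfl fun k _ => hfac k, Finset.prod_mul_distrib,
      Finset.prod_const, Finset.card_range, hT]
  have hdvdp1 : (1 - η) ∣ (p : R) := by
    rw [hpT]
    exact Dvd.dvd.mul_right (dvd_pow_self _ (show q ≠ 0 by omega)) T
  have hTfact : (1 - η) ∣ T - ((Nat.factorial q : ℕ) : R) := by
    have hprodfac : (∏ k ∈ range q, ((k : R) + 1)) = ((Nat.factorial q : ℕ) : R) := by
      rw [← Finset.prod_range_add_one_eq_factorial q, Nat.cast_prod]
      push_cast
      rfl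
    rw [← hprodfac, hT]
    refine dvd_prod_sub_prod _ _ _ _ fun k _ => ?_
    have e : (∑ i ∈ range (k + 1), η ^ i) - ((k : R) + 1)
        = ∑ i ∈ range (k + 1), (η ^ i - 1) := by
      rw [Finset.sum_sub_distrib]
      simp
    rw [e]
    refine Finset.dvd_sum fun i _ => ?_
    exact ⟨-(∑ j ∈ range i, η ^ j), by linear_combination -geom_sum_mul η i⟩
  have hwilson : (p : R) ∣ ((Nat.factorial q : ℕ) : R) + 1 := by
    have hnat : p ∣ Nat.factorial q + 1 := by
      have hw : ((Nat.factorial (p-1) : ℕ) : ZMod p) = -1 := ZMod.wilsons_lemma p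
      have h0 : ((Nat.factorial q + 1 : ℕ) : ZMod p) = 0 := by
        push_cast
        rw [hq, hw]
        ring
      exact (ZMod.natCast_eq_zero_iff _ _).mp h0
    have h1 := Nat.cast_dvd_cast (α := R) hnat
    push_cast at h1
    exact h1
  have hT1 : (1 - η) ∣ T + 1 := by
    have e : T + 1 = (T - ((Nat.factorial q : ℕ) : R)) + (((Nat.factorial q : ℕ) : R) + 1) := by ring
    rw [e]
    exact dvd_add hTfact (dvd_trans hdvdp1 hwilson)
  have hL2 : (1 - η) ^ p ∣ (1 - η) ^ q + (p : R) := by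
    have e1 : (1 - η) ^ q + (p : R) = (1 - η) ^ q * (1 + T) := by
      rw [hpT]; ring
    have e2 : (1 - η) ^ p = (1 - η) ^ q * (1 - η) := by
      rw [← pow_succ]
      congr 1
      omega
    rw [e1, e2]
    exact mul_dvd_mul_left _ (by rwa [add_comm] at hT1)
  -- Step 5: 1 - η = l ^ m + p * l * c
  have h5 : (p : R) * l ∣ (1 - l) ^ p ^ n' - (1 - l ^ p ^ n') := auxB hp hoddp l n'
  have hζl : (1 : R) - l = ζ := by rw [hl]; ring
  rw [hζl, ← hm] at h5
  obtain ⟨c, hc⟩ := h5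
  -- hc : ζ ^ m - (1 - l ^ m) = p * l * c, i.e. η - (1 - l^m) = p*l*c
  -- Step 6
  have hexp : m + (φn + 1 - m) = φn + 1 := by omega
  have hpow : l ^ m * l ^ (φn + 1 - m) = l ^ φn * l := by
    rw [← pow_add, hexp, pow_succ]
  set d : R := -(l ^ (φn + 1 - m) * G * c) with hd
  have h1η : 1 - η = l ^ m * (1 + d) := by
    rw [hd, hηdef]
    linear_combination -hc + G * c * hpow - l * c * hG
  have hld : l ^ (m + 1) ∣ d := by
    rw [hd]
    refine dvd_neg.mpr ?_
    exact Dvd.dvd.mul_right (Dvd.dvd.mul_right (pow_dvd_pow l (by omega)) G) c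
  -- Step 7
  have hfin1 : l ^ p ^ (n' + 1) ∣ (1 - η) ^ q - l ^ φn := by
    have h7 : (1 - η) ^ q = l ^ φn * (1 + d) ^ q := by
      rw [h1η, mul_pow, ← pow_mul, hφn]
    rw [h7]
    have e : l ^ φn * (1 + d) ^ q - l ^ φn = l ^ φn * ((1 + d) ^ q - 1) := by ring
    rw [e]
    have hdd : l ^ m ∣ (1 + d) ^ q - 1 := by
      have h8 : (1 + d) - 1 ∣ (1 + d) ^ q - 1 ^ q := sub_dvd_pow_sub_pow _ _ q
      simp only [add_sub_cancel_left, one_pow] at h8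
      exact dvd_trans (dvd_trans (pow_dvd_pow l (Nat.le_succ m)) hld) h8
    rw [hpow_succ, hmul, pow_add]
    exact mul_dvd_mul_left _ hdd
  have hfin2 : l ^ p ^ (n' + 1) ∣ (1 - η) ^ p := by
    rw [h1η, mul_pow, ← pow_mul, hpow_succ]
    exact dvd_mul_right _ _
  rw [hφ]
  have e : l ^ φn + (p : R) = (l ^ φn - (1 - η) ^ q) + ((1 - η) ^ q + (p : R)) := by ring
  rw [e]
  exact dvd_add (dvd_sub_comm.mp hfin1) (dvd_trans hfin2 hL2)
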